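/- Let Ω ⊆ ℝⁿ be open, m ∈ [2, ∞), f : Ω×ℝ → ℝ continuous, and g : ℝ → ℝ continuous satisfying (g₀). Define M_m(p, X) = |p|^{m−4}(|p|² tr X + (m−2)⟨Xp, p⟩) for p ≠ 0 and M_m(0, X) = 0, and set h(x, s) = e^{(m−1)G(Φ_g⁻¹(s))} f(x, Φ_g⁻¹(s)). Then u ∈ C²(Ω) satisfies M_m(Du, D²u) + (m−1) g(u)|Du|^m + f(x, u) = 0 at every point of Ω if and only if v = Φ_g ∘ u satisfies M_m(Dv, D²v) + h(x, v) = 0 at every point of Ω. -/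

import Mathlib

open Real Filter Set

/-- Gradient of `u` at `x` (vector of partial derivatives). -/
noncomputable def vgrad {n : ℕ} (u : (Fin n → ℝ) → ℝ) (x : Fin n → ℝ) : Fin n → ℝ :=
  fun i => fderiv ℝ u x (Pi.single i 1)

/-- Hessian matrix of `u` at `x`. -/
noncomputable def vhess {n : ℕ} (u : (Fin n → ℝ) → ℝ) (x : Fin n → ℝ) :
    Matrix (Fin n) (Fin n) ℝ :=
  Matrix.of fun i j => fderiv ℝ (fun y => fderiv ℝ u y (Pi.single j 1)) x (Pi.single i 1)

noncomputable def Gg (g : ℝ → ℝ) (s : ℝ) : ℝ := ∫ τ in (0:ℝ)..s, g τ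

noncomputable def Phig (g : ℝ → ℝ) (t : ℝ) : ℝ := ∫ s in (0:ℝ)..t, Real.exp (Gg g s)

/-- Condition `(g₀)`. -/
def g0cond (g : ℝ → ℝ) : Prop :=
  ∃ s₀ : ℝ, 0 ≤ s₀ ∧ (∀ s, s₀ ≤ s → 0 ≤ g s) ∧ (∀ s, s ≤ -s₀ → g s ≤ 0)
/-- Euclidean norm |p| of a vector in ℝⁿ (as a pi type). -/
noncomputable def enorm' {n : ℕ} (p : Fin n → ℝ) : ℝ := Real.sqrt (∑ i, p i ^ 2)

open scoped Classical in
/-- The symbol of the m-Laplace operator in non-divergence form, with M_m(0,X) = 0 and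
M_m(p,X) = |p|^{m-4} (|p|² tr X + (m-2) ⟨Xp, p⟩) for p ≠ 0, real powers being rpow. -/
noncomputable def mLaplaceOp {n : ℕ} (m : ℝ) (p : Fin n → ℝ)
    (X : Matrix (Fin n) (Fin n) ℝ) : ℝ :=
  if p = 0 then 0
  else enorm' p ^ (m - 4) *
    (enorm' p ^ (2 : ℕ) * Matrix.trace X + (m - 2) * dotProduct (Matrix.mulVec X p) p)

open Topology intervalIntegral in
lemma hasDerivAt_primitive {f : ℝ → ℝ} (hf : Continuous f) (t : ℝ) :
    HasDerivAt (fun t => ∫ s in (0:ℝ)..t, f s) (f t) t :=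
  integral_hasDerivAt_right (hf.intervalIntegrable 0 t)
    (hf.stronglyMeasurable.stronglyMeasurableAtFilter) hf.continuousAt

lemma Gg_hasDerivAt {g : ℝ → ℝ} (hg : Continuous g) (t : ℝ) :
    HasDerivAt (Gg g) (g t) t := hasDerivAt_primitive hg t

lemma Gg_continuous {g : ℝ → ℝ} (hg : Continuous g) : Continuous (Gg g) := by
  have : Differentiable ℝ (Gg g) := fun t => (Gg_hasDerivAt hg t).differentiableAt
  exact this.continuous

lemma Phig_hasDerivAt {g : ℝ → ℝ} (hg : Continuous g) (t : ℝ) :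
    HasDerivAt (Phig g) (Real.exp (Gg g t)) t :=
  hasDerivAt_primitive (Real.continuous_exp.comp (Gg_continuous hg)) t

lemma Phig_deriv_hasDerivAt {g : ℝ → ℝ} (hg : Continuous g) (t : ℝ) :
    HasDerivAt (fun s => Real.exp (Gg g s)) (g t * Real.exp (Gg g t)) t := by
  simpa [mul_comm] using (Gg_hasDerivAt hg t).exp

open Topology in
lemma comp_derivs {n : ℕ} {Ω : Set (Fin n → ℝ)} (hΩ : IsOpen Ω)
    {u : (Fin n → ℝ) → ℝ} (hu : ContDiffOn ℝ 2 u Ω) {g : ℝ → ℝ} (hg : Continuous g)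
    {x : Fin n → ℝ} (hx : x ∈ Ω) :
    (vgrad (Phig g ∘ u) x = fun i => Real.exp (Gg g (u x)) * vgrad u x i) ∧
    (vhess (Phig g ∘ u) x = Matrix.of fun i j =>
      g (u x) * Real.exp (Gg g (u x)) * vgrad u x i * vgrad u x j
        + Real.exp (Gg g (u x)) * vhess u x i j) := by
  have hud : ∀ y ∈ Ω, HasFDerivAt u (fderiv ℝ u y) y := fun y hy =>
    ((hu.contDiffAt (hΩ.mem_nhds hy)).differentiableAt (by norm_num)).hasFDerivAt
  have hv : ∀ y ∈ Ω, HasFDerivAt (Phig g ∘ u) (Real.exp (Gg g (u y)) • fderiv ℝ u y) y :=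
    fun y hy => (Phig_hasDerivAt hg (u y)).comp_hasFDerivAt y (hud y hy)
  have hvg : ∀ y ∈ Ω, fderiv ℝ (Phig g ∘ u) y = Real.exp (Gg g (u y)) • fderiv ℝ u y :=
    fun y hy => (hv y hy).fderiv
  constructor
  · funext i
    simp [vgrad, hvg x hx]
  · -- Hessian
    have hfd : ContDiffOn ℝ 1 (fderiv ℝ u) Ω := by
      have h2 : ContDiffOn ℝ (1 + 1) u Ω := hu.of_le (by norm_num)
      exact ((contDiffOn_succ_iff_fderiv_of_isOpen hΩ).mp h2).2.2
    funext i j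
    set a := Real.exp (Gg g (u x)) with ha
    set p := vgrad u x with hp
    have hw : DifferentiableAt ℝ (fun y => fderiv ℝ u y (Pi.single j 1)) x := by
      have : DifferentiableAt ℝ (fderiv ℝ u) x :=
        (hfd.differentiableOn one_ne_zero).differentiableAt (hΩ.mem_nhds hx)
      exact this.clm_apply (differentiableAt_const _)
    have h1 : HasFDerivAt (fun y => Real.exp (Gg g (u y)))
        ((g (u x) * a) • fderiv ℝ u x) x :=
      (Phig_deriv_hasDerivAt hg (u x)).comp_hasFDerivAt x (hud x hx)
    have hmul : HasFDerivAt (fun y => Real.exp (Gg g (u y)) * fderiv ℝ u y (Pi.single j 1))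
        ((Real.exp (Gg g (u x))) • (fderiv ℝ (fun y => fderiv ℝ u y (Pi.single j 1)) x)
          + (fderiv ℝ u x (Pi.single j 1)) • ((g (u x) * a) • fderiv ℝ u x)) x :=
      h1.mul hw.hasFDerivAt
    have heq : (fun y => fderiv ℝ (Phig g ∘ u) y (Pi.single j 1))
        =ᶠ[𝓝 x] fun y => Real.exp (Gg g (u y)) * fderiv ℝ u y (Pi.single j 1) := by
      filter_upwards [hΩ.mem_nhds hx] with y hy
      simp [hvg y hy]
    have : fderiv ℝ (fun y => fderiv ℝ (Phig g ∘ u) y (Pi.single j 1)) x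
        = fderiv ℝ (fun y => Real.exp (Gg g (u y)) * fderiv ℝ u y (Pi.single j 1)) x :=
      heq.fderiv_eq
    show fderiv ℝ (fun y => fderiv ℝ (Phig g ∘ u) y (Pi.single j 1)) x (Pi.single i 1) = _
    rw [this, hmul.fderiv]
    simp only [ContinuousLinearMap.add_apply, ContinuousLinearMap.smul_apply, smul_eq_mul]
    show a * vhess u x i j + p j * (g (u x) * a * p i) = _
    simp only [Matrix.of_apply]
    ring

lemma enorm'_smul {n : ℕ} (p : Fin n → ℝ) {a : ℝ} (ha : 0 ≤ a) :
    enorm' (fun i => a * p i) = a * enorm' p := by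
  unfold enorm'
  have h : ∑ i, (a * p i) ^ 2 = a ^ 2 * ∑ i, p i ^ 2 := by
    rw [Finset.mul_sum]; exact Finset.sum_congr rfl fun i _ => by ring
  rw [h, Real.sqrt_mul (sq_nonneg a), Real.sqrt_sq ha]

lemma key {n : ℕ} {m : ℝ} (hm : 2 ≤ m) (p : Fin n → ℝ) (X : Matrix (Fin n) (Fin n) ℝ)
    (a gval : ℝ) (ha : 0 < a) :
    mLaplaceOp m (fun i => a * p i)
      (Matrix.of fun i j => gval * a * p i * p j + a * X i j)
    = a ^ (m - 1) * (mLaplaceOp m p X + (m - 1) * gval * enorm' p ^ m) := by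
  have hm0 : m ≠ 0 := by linarith
  by_cases hp : p = 0
  · have h0 : (fun i : Fin n => a * p i) = 0 := by funext i; simp [hp]
    have he : enorm' p = 0 := by simp [enorm', hp]
    unfold mLaplaceOp
    rw [if_pos h0, if_pos hp]
    simp [he, Real.zero_rpow hm0]
  · -- nonzero case
    have hq : (fun i => a * p i) ≠ 0 := by
      intro h
      apply hp
      funext i
      have := congrFun h i
      simp at this
      rcases this with h1 | h2
      · exact absurd h1 ha.ne'
      · simp [h2]
    set S : ℝ := ∑ i, p i ^ 2 with hS
    have hS0 : 0 < S := by
      obtain ⟨i, hi⟩ : ∃ i, p i ≠ 0 := by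
        by_contra h; push_neg at h; exact hp (funext fun i => h i)
      exact Finset.sum_pos' (fun j _ => sq_nonneg _)
        ⟨i, Finset.mem_univ i, by positivity⟩
    set r : ℝ := enorm' p with hr
    have hr0 : 0 < r := Real.sqrt_pos.mpr hS0
    have hr2 : r ^ (2:ℕ) = S := Real.sq_sqrt hS0.le
    set D : ℝ := dotProduct (Matrix.mulVec X p) p with hD
    have henq : enorm' (fun i => a * p i) = a * r := enorm'_smul p ha.le
    -- trace
    have htr : Matrix.trace (Matrix.of fun i j => gval * a * p i * p j + a * X i j)
        = gval * a * S + a * Matrix.trace X := by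
      simp only [Matrix.trace, Matrix.diag, Matrix.of_apply]
      rw [Finset.sum_add_distrib, hS, Finset.mul_sum, Finset.mul_sum]
      congr 1
      exact Finset.sum_congr rfl fun i _ => by ring
    -- dot product
    have hdot : dotProduct
        (Matrix.mulVec (Matrix.of fun i j => gval * a * p i * p j + a * X i j)
          (fun i => a * p i)) (fun i => a * p i)
        = gval * a ^ 3 * S ^ 2 + a ^ 3 * D := by
      have hrow : ∀ i, (∑ j, (gval * a * p i * p j + a * X i j) * (a * p j))
          = gval * a ^ 2 * p i * S + a ^ 2 * (∑ j, X i j * p j) := by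
        intro i
        simp only [add_mul]
        rw [Finset.sum_add_distrib]
        congr 1
        · rw [hS, Finset.mul_sum]
          exact Finset.sum_congr rfl fun j _ => by ring
        · rw [Finset.mul_sum]
          exact Finset.sum_congr rfl fun j _ => by ring
      simp only [dotProduct, Matrix.mulVec, Matrix.of_apply]
      calc (∑ i, (∑ j, (gval * a * p i * p j + a * X i j) * (a * p j)) * (a * p i))
          = ∑ i, (gval * a ^ 2 * p i * S + a ^ 2 * (∑ j, X i j * p j)) * (a * p i) :=
            Finset.sum_congr rfl fun i _ => by rw [hrow i]
        _ = ∑ i, (gval * a ^ 3 * S * p i ^ 2 + a ^ 3 * ((∑ j, X i j * p j) * p i)) :=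
            Finset.sum_congr rfl fun i _ => by ring
        _ = gval * a ^ 3 * S ^ 2 + a ^ 3 * D := by
            rw [Finset.sum_add_distrib, ← Finset.mul_sum, ← Finset.mul_sum, hD,
              dotProduct, ← hS]
            simp [Matrix.mulVec, dotProduct]
            ring
    simp only [mLaplaceOp, if_neg hp, if_neg hq, henq, htr, hdot]
    rw [Real.mul_rpow ha.le hr0.le]
    have har : a ^ (m - 4) * a ^ (3:ℕ) = a ^ (m - 1) := by
      rw [← Real.rpow_natCast a 3, ← Real.rpow_add ha]; congr 1; ring
    have hrm : r ^ (m - 4) * r ^ (4:ℕ) = r ^ m := by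
      rw [← Real.rpow_natCast r 4, ← Real.rpow_add hr0]; congr 1; ring
    have hS2 : S = r ^ (2:ℕ) := hr2.symm
    calc a ^ (m-4) * r ^ (m-4) * ((a*r) ^ (2:ℕ) * (gval * a * S + a * Matrix.trace X)
          + (m-2) * (gval * a ^ 3 * S ^ 2 + a ^ 3 * D))
        = (a ^ (m-4) * a ^ (3:ℕ)) *
            (r ^ (m-4) * (r ^ (2:ℕ) * Matrix.trace X + (m-2) * D)
              + (m-1) * gval * (r ^ (m-4) * r ^ (4:ℕ))) := by
          rw [hS2]; ring
      _ = a ^ (m-1) * (r ^ (m-4) * (r ^ (2:ℕ) * Matrix.trace X + (m-2) * D)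
              + (m-1) * gval * r ^ m) := by rw [har, hrm]

/-- m-Laplacian, m ∈ [2,∞): u ∈ C²(Ω) solves
M_m(Du,D²u) + (m-1)g(u)|Du|^m + f(x,u) = 0 iff v = Φ_g ∘ u solves M_m(Dv,D²v) + h(x,v) = 0
with h(x,s) = e^{(m-1)G(Φ_g⁻¹(s))} f(x, Φ_g⁻¹(s)). -/
theorem stmt16 {n : ℕ} (Ω : Set (Fin n → ℝ)) (hΩ : IsOpen Ω)
    (m : ℝ) (hm : 2 ≤ m)
    (f : (Fin n → ℝ) → ℝ → ℝ)
    (hf : ContinuousOn (fun q : (Fin n → ℝ) × ℝ => f q.1 q.2) (Ω ×ˢ Set.univ))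
    (g : ℝ → ℝ) (hg : Continuous g) (hg0 : g0cond g)
    (Φinv : ℝ → ℝ) (hleft : ∀ t : ℝ, Φinv (Phig g t) = t)
    (hright : ∀ s : ℝ, Phig g (Φinv s) = s)
    (u : (Fin n → ℝ) → ℝ) (hu : ContDiffOn ℝ 2 u Ω) :
    (∀ x ∈ Ω, mLaplaceOp m (vgrad u x) (vhess u x)
        + (m - 1) * g (u x) * enorm' (vgrad u x) ^ m + f x (u x) = 0) ↔
    (∀ x ∈ Ω, mLaplaceOp m (vgrad (Phig g ∘ u) x) (vhess (Phig g ∘ u) x)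
        + Real.exp ((m - 1) * Gg g (Φinv ((Phig g ∘ u) x)))
            * f x (Φinv ((Phig g ∘ u) x)) = 0) := by
  have hmain : ∀ x ∈ Ω,
      mLaplaceOp m (vgrad (Phig g ∘ u) x) (vhess (Phig g ∘ u) x)
        + Real.exp ((m - 1) * Gg g (Φinv ((Phig g ∘ u) x))) * f x (Φinv ((Phig g ∘ u) x))
      = Real.exp (Gg g (u x)) ^ (m - 1) *
          (mLaplaceOp m (vgrad u x) (vhess u x)
            + (m - 1) * g (u x) * enorm' (vgrad u x) ^ m + f x (u x)) := by
    intro x hx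
    obtain ⟨hgr, hhe⟩ := comp_derivs hΩ hu hg hx
    have hvx : (Phig g ∘ u) x = Phig g (u x) := rfl
    have hinv : Φinv ((Phig g ∘ u) x) = u x := by rw [hvx, hleft]
    set a := Real.exp (Gg g (u x)) with ha
    have haexp : Real.exp ((m - 1) * Gg g (u x)) = a ^ (m - 1) := by
      rw [ha, ← Real.exp_log (Real.rpow_pos_of_pos (Real.exp_pos _) (m-1)),
        Real.log_rpow (Real.exp_pos _), Real.log_exp, mul_comm]
    rw [hinv, hgr, hhe, key hm (vgrad u x) (vhess u x) a (g (u x)) (Real.exp_pos _), haexp]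
    ring
  constructor
  · intro h x hx
    rw [hmain x hx, h x hx, mul_zero]
  · intro h x hx
    have h2 := h x hx
    rw [hmain x hx] at h2
    have hane : Real.exp (Gg g (u x)) ^ (m - 1) ≠ 0 :=
      (Real.rpow_pos_of_pos (Real.exp_pos _) _).ne'
    exact (mul_eq_zero.mp h2).resolve_left hane
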